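/- Let h : ℝⁿ → ℝ be convex and differentiable with L-Lipschitz gradient, L > 0. Let Y ⊆ ℝⁿ be nonempty closed convex and X* ⊆ Y nonempty closed convex. Let v ∈ ℝⁿ satisfy h(v) > 0 and R_v ≤ 0, set v̄ = Π_{X*}(v) and assume h(v̄) ≤ 0. Let β ∈ (0,1) and M_h > 0 with h(v) ≤ M_h. Define z = v − (β/L)·∇h(v) and x⁺ = Π_Y(z). Then dist²(x⁺, X*) ≤ ‖v − v̄‖² − (2β(1 − β)/(M_h·L))·h(v)². -/

import Mathlib

open Metric
open scoped RealInnerProductSpace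

/-- Gradient inequality for convex differentiable functions. -/
lemma grad_inequality_aux {n : ℕ} (h : EuclideanSpace ℝ (Fin n) → ℝ)
    (hconv : ConvexOn ℝ Set.univ h) (hdiff : Differentiable ℝ h)
    (v w : EuclideanSpace ℝ (Fin n)) :
    ⟪gradient h v, w - v⟫ ≤ h w - h v := by
  set f : ℝ → ℝ := fun t => h (v + t • (w - v)) with hf
  have hfeq : f = h ∘ (AffineMap.lineMap v w : ℝ →ᵃ[ℝ] EuclideanSpace ℝ (Fin n)) := by
    funext t
    simp [hf, AffineMap.lineMap_apply, add_comm]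
  have hfc : ConvexOn ℝ Set.univ f := by
    rw [hfeq]
    have := hconv.comp_affineMap (AffineMap.lineMap v w : ℝ →ᵃ[ℝ] EuclideanSpace ℝ (Fin n))
    simpa [Set.preimage_univ] using this
  have hline : HasDerivAt (fun t : ℝ => v + t • (w - v)) (w - v) 0 := by
    have : HasDerivAt (fun t : ℝ => v + t • (w - v)) ((1:ℝ) • (w - v)) 0 :=
      ((hasDerivAt_id (0:ℝ)).smul_const (w - v)).const_add v
    simpa using this
  have hgrad := (hdiff (v + (0:ℝ) • (w - v))).hasGradientAt.hasFDerivAt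
  have hfd : HasDerivAt f (⟪gradient h v, w - v⟫) 0 := by
    have := hgrad.comp_hasDerivAt 0 hline
    simpa [hf, InnerProductSpace.toDual_apply_apply, Function.comp_def] using this
  have hsl := hfc.le_slope_of_hasDerivAt (Set.mem_univ (0:ℝ)) (Set.mem_univ 1) one_pos hfd
  have hs : slope f 0 1 = h w - h v := by
    simp [slope_def_field, hf]
  linarith [hsl.trans_eq hs]

lemma proj_VI {F : Type*} [NormedAddCommGroup F] [InnerProductSpace ℝ F]
    {K : Set F} (hK : Convex ℝ K) {u p : F} (hp : p ∈ K)
    (hmin : ∀ w ∈ K, ‖u - p‖ ≤ ‖u - w‖) : ∀ w ∈ K, ⟪u - p, w - p⟫ ≤ 0 := by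
  haveI : Nonempty K := ⟨⟨p, hp⟩⟩
  have heq : ‖u - p‖ = ⨅ w : K, ‖u - w‖ := by
    refine le_antisymm (le_ciInf fun w => hmin w w.2) ?_
    have hbdd : BddBelow (Set.range fun w : K => ‖u - (w : F)‖) :=
      ⟨0, by rintro x ⟨w, rfl⟩; exact norm_nonneg _⟩
    exact ciInf_le hbdd ⟨p, hp⟩
  exact (norm_eq_iInf_iff_real_inner_le_zero hK hp).mp heq

/-- The center of the ball associated with the quadratic upper approximation
of `h` at `v` with parameter `L`: `c_v = v - (1/L) ∇h(v)`. -/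
noncomputable def ballCenter {n : ℕ} (h : EuclideanSpace ℝ (Fin n) → ℝ) (L : ℝ)
    (v : EuclideanSpace ℝ (Fin n)) : EuclideanSpace ℝ (Fin n) :=
  v - (1 / L) • gradient h v

/-- The radius term `R_v = ‖∇h(v)‖²/L² - 2 h(v)/L`. -/
noncomputable def ballRadius {n : ℕ} (h : EuclideanSpace ℝ (Fin n) → ℝ) (L : ℝ)
    (v : EuclideanSpace ℝ (Fin n)) : ℝ :=
  ‖gradient h v‖ ^ 2 / L ^ 2 - 2 * h v / L

set_option maxHeartbeats 1000000 in
theorem stmt_9 {n : ℕ} (h : EuclideanSpace ℝ (Fin n) → ℝ)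
    (hconv : ConvexOn ℝ Set.univ h) (hdiff : Differentiable ℝ h)
    (L : ℝ) (hL : 0 < L)
    (hLip : ∀ x y, ‖gradient h x - gradient h y‖ ≤ L * ‖x - y‖)
    (Y Xstar : Set (EuclideanSpace ℝ (Fin n)))
    (hYne : Y.Nonempty) (hYcl : IsClosed Y) (hYcv : Convex ℝ Y)
    (hXsne : Xstar.Nonempty) (hXscl : IsClosed Xstar) (hXscv : Convex ℝ Xstar)
    (hXsY : Xstar ⊆ Y)
    (v : EuclideanSpace ℝ (Fin n)) (hv : 0 < h v) (hR : ballRadius h L v ≤ 0)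
    -- `vbar = Π_{X*}(v)` : projection of `v` onto `X*`
    (vbar : EuclideanSpace ℝ (Fin n)) (hvbarmem : vbar ∈ Xstar)
    (hvbarproj : ∀ y ∈ Xstar, ‖v - vbar‖ ≤ ‖v - y‖)
    (hfeas : h vbar ≤ 0)
    (β : ℝ) (hβ : β ∈ Set.Ioo (0 : ℝ) 1)
    (Mh : ℝ) (hMh : 0 < Mh) (hhbd : h v ≤ Mh)
    (z : EuclideanSpace ℝ (Fin n))
    (hz : z = v - (β / L) • gradient h v)
    -- `xplus = Π_Y(z)` : projection of `z` onto `Y`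
    (xplus : EuclideanSpace ℝ (Fin n)) (hxpmem : xplus ∈ Y)
    (hxpproj : ∀ y ∈ Y, ‖z - xplus‖ ≤ ‖z - y‖) :
    (infDist xplus Xstar) ^ 2
      ≤ ‖v - vbar‖ ^ 2 - 2 * β * (1 - β) / (Mh * L) * (h v) ^ 2 := by
  obtain ⟨hβ0, hβ1⟩ := hβ
  set g := gradient h v with hg
  -- gradient inequality
  have hgi : ⟪g, vbar - v⟫ ≤ h vbar - h v := grad_inequality_aux h hconv hdiff v vbar
  have key1 : h v ≤ ⟪g, v - vbar⟫ := by
    have hneg : ⟪g, v - vbar⟫ = -⟪g, vbar - v⟫ := by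
      rw [← inner_neg_right]; congr 1; abel
    rw [hneg]; linarith
  -- bound on the gradient norm
  have key2 : ‖g‖ ^ 2 ≤ 2 * L * h v := by
    have hR' : ‖g‖ ^ 2 / L ^ 2 ≤ 2 * h v / L := by
      have := hR; unfold ballRadius at this; linarith
    rw [div_le_div_iff₀ (by positivity) hL] at hR'
    nlinarith [hL]
  -- variational inequality for the projection onto Y
  have hVI := proj_VI hYcv hxpmem hxpproj
  -- projection decreases distance to points of Y
  have hB : ‖xplus - vbar‖ ^ 2 ≤ ‖z - vbar‖ ^ 2 := by
    have hvb : ⟪z - xplus, vbar - xplus⟫ ≤ 0 := hVI vbar (hXsY hvbarmem)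
    have hdecomp : z - vbar = (z - xplus) + (xplus - vbar) := by abel
    have hexp : ‖z - vbar‖ ^ 2
        = ‖z - xplus‖ ^ 2 + 2 * ⟪z - xplus, xplus - vbar⟫ + ‖xplus - vbar‖ ^ 2 := by
      rw [hdecomp, norm_add_sq_real]
    have h2 : ⟪z - xplus, xplus - vbar⟫ = -⟪z - xplus, vbar - xplus⟫ := by
      rw [← inner_neg_right]; congr 1; abel
    nlinarith [sq_nonneg ‖z - xplus‖]
  -- expansion of ‖z - vbar‖²
  have expansion : ‖z - vbar‖ ^ 2
      = ‖v - vbar‖ ^ 2 - 2 * (β / L) * ⟪g, v - vbar⟫ + (β / L) ^ 2 * ‖g‖ ^ 2 := by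
    have hzv : z - vbar = (v - vbar) - (β / L) • g := by rw [hz]; abel
    rw [hzv, norm_sub_sq_real, real_inner_smul_right, norm_smul, mul_pow,
      Real.norm_eq_abs, sq_abs, real_inner_comm (v - vbar) g]
    ring
  -- distance to Xstar bounded by distance to vbar
  have hC : infDist xplus Xstar ≤ ‖xplus - vbar‖ := by
    have := infDist_le_dist_of_mem (x := xplus) hvbarmem
    rwa [dist_eq_norm] at this
  have hC2 : (infDist xplus Xstar) ^ 2 ≤ ‖xplus - vbar‖ ^ 2 :=
    pow_le_pow_left₀ (infDist_nonneg) hC 2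
  -- scalar estimates
  have h1 : (β / L) ^ 2 * ‖g‖ ^ 2 ≤ 2 * β ^ 2 / L * h v := by
    have hb : (β / L) ^ 2 * ‖g‖ ^ 2 ≤ (β / L) ^ 2 * (2 * L * h v) :=
      mul_le_mul_of_nonneg_left key2 (by positivity)
    have heq2 : (β / L) ^ 2 * (2 * L * h v) = 2 * β ^ 2 / L * h v := by
      field_simp
    linarith [hb.trans_eq heq2]
  have h2' : 2 * (β / L) * h v ≤ 2 * (β / L) * ⟪g, v - vbar⟫ :=
    mul_le_mul_of_nonneg_left key1 (by positivity)
  have h3 : 2 * β * (1 - β) / (Mh * L) * (h v) ^ 2 ≤ 2 * β * (1 - β) / L * h v := by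
    rw [div_mul_eq_mul_div, div_mul_eq_mul_div, div_le_div_iff₀ (by positivity) (by positivity)]
    nlinarith [mul_nonneg (mul_nonneg (mul_pos hβ0 (sub_pos.mpr hβ1)).le
      (mul_pos hL hv).le) (sub_nonneg.mpr hhbd)]
  have h4 : 2 * (β / L) * h v - 2 * β ^ 2 / L * h v = 2 * β * (1 - β) / L * h v := by
    field_simp
  linarith [hC2.trans hB, expansion ▸ (hC2.trans hB)]
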